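/- For n ≥ 4, the convex hull of the set of circuits on values v_1 < v_2 < ... < v_n (points x in R^n such that the map sending v_i to x_i defines a single n-cycle on {v_1,...,v_n}) has affine dimension exactly n−1. -/

import Mathlib

/-- A circuit on `{1,...,n}`: a permutation of `Fin n` that is a single `n`-cycle. -/
def IsCircuitPerm {n : ℕ} (σ : Equiv.Perm (Fin n)) : Prop :=
  σ.IsCycle ∧ σ.support = Finset.univ

/-- A circuit point on values `v`: `x i = v (σ i)` for some single-`n`-cycle permutation `σ`. -/
def IsCircuitPt {n : ℕ} (v : Fin n → ℝ) (x : Fin n → ℝ) : Prop :=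
  ∃ σ : Equiv.Perm (Fin n), IsCircuitPerm σ ∧ ∀ i, x i = v (σ i)

namespace CircuitDimAux

open Equiv Equiv.Perm Finset

variable {m : ℕ}

lemma one_ne : (1 : Fin (m+4)) ≠ 0 := by
  simp [Fin.ext_iff]

lemma two_ne : (1+1 : Fin (m+4)) ≠ 0 := by
  simp only [ne_eq, Fin.ext_iff, Fin.add_def, Fin.val_one, Fin.val_zero]
  rw [Nat.mod_eq_of_lt (show 1+1 < m+4 by omega)]
  omega

lemma three_ne : (1+1+1 : Fin (m+4)) ≠ 0 := by
  simp only [ne_eq, Fin.ext_iff, Fin.add_def, Fin.val_one, Fin.val_zero]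
  rw [Nat.mod_eq_of_lt (show 1+1 < m+4 by omega),
    Nat.mod_eq_of_lt (show 1+1+1 < m+4 by omega)]
  omega

lemma ne_of_shift {x y c : Fin (m+4)} (hxy : x - y = c) (hc : c ≠ 0) : x ≠ y :=
  fun h => hc (by rw [← hxy, h, sub_self])

/-- `f_j = e_j - e_{j+1}` (indices mod `n`). -/
def fv (j : Fin (m+4)) : Fin (m+4) → ℝ :=
  fun i => (if i = j then (1:ℝ) else 0) - (if i = j + 1 then (1:ℝ) else 0)

/-- The circuit point associated with the conjugate of the standard rotation by `g`. -/
def pt (v : Fin (m+4) → ℝ) (g : Equiv.Perm (Fin (m+4))) : Fin (m+4) → ℝ :=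
  fun i => v ((g * finRotate (m+4) * g⁻¹) i)

lemma pt_circuit (v : Fin (m+4) → ℝ) (g : Equiv.Perm (Fin (m+4))) :
    IsCircuitPt v (pt v g) := by
  refine ⟨g * finRotate (m+4) * g⁻¹, ⟨?_, ?_⟩, fun i => rfl⟩
  · exact (isCycle_finRotate (n := m+2)).conj
  · rw [Equiv.Perm.support_conj, support_finRotate (n := m+2), Finset.map_univ_equiv]

lemma pt_apply (v : Fin (m+4) → ℝ) (g : Equiv.Perm (Fin (m+4))) (i : Fin (m+4)) :
    pt v g i = v (g (g⁻¹ i + 1)) := by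
  simp [pt, Equiv.Perm.mul_apply, finRotate_succ_apply]

lemma pt_one (v : Fin (m+4) → ℝ) (i : Fin (m+4)) : pt v 1 i = v (i + 1) := by
  simp [pt, Equiv.Perm.mul_apply, finRotate_succ_apply]

/-- Difference vector for conjugation by an adjacent swap. -/
lemma LA (v : Fin (m+4) → ℝ) (s : Fin (m+4)) :
    pt v (Equiv.swap s (s+1)) - pt v 1
      = (v (s+1) - v s) • fv (s-1) + (v (s+1+1) - v s) • fv s := by
  have d10 : s + 1 ≠ s := ne_of_shift (by abel) one_ne
  have d20 : s + 1 + 1 ≠ s := ne_of_shift (by abel) two_ne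
  have d21 : s + 1 + 1 ≠ s + 1 := ne_of_shift (by abel) one_ne
  have dm0 : s - 1 ≠ s := ne_of_shift (show s - 1 - s = -1 by abel) (neg_ne_zero.mpr one_ne)
  have dm1 : s - 1 ≠ s + 1 :=
    ne_of_shift (show s - 1 - (s+1) = -(1+1) by abel) (neg_ne_zero.mpr two_ne)
  have e1 : s - 1 + 1 = s := by abel
  funext i
  simp only [Pi.sub_apply, Pi.add_apply, Pi.smul_apply, smul_eq_mul, pt_apply,
    Equiv.swap_inv, inv_one, Equiv.Perm.coe_one, id_eq]
  by_cases h0 : i = s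
  · subst h0
    rw [Equiv.swap_apply_left, Equiv.swap_apply_of_ne_of_ne d20 d21]
    simp [fv, e1, Ne.symm dm0, Ne.symm d10]
    try ring
  by_cases h1 : i = s + 1
  · subst h1
    rw [Equiv.swap_apply_right, Equiv.swap_apply_right]
    simp [fv, e1, Ne.symm dm1, d10]
    try ring
  by_cases h2 : i = s - 1
  · subst h2
    rw [Equiv.swap_apply_of_ne_of_ne dm0 dm1, e1, Equiv.swap_apply_left]
    simp [fv, e1, dm0, dm1]
    try ring
  · have hi1 : i + 1 ≠ s := fun h => h2 (eq_sub_of_add_eq h)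
    have hi2 : i + 1 ≠ s + 1 := fun h => h0 (add_right_cancel h)
    rw [Equiv.swap_apply_of_ne_of_ne h0 h1, Equiv.swap_apply_of_ne_of_ne hi1 hi2]
    simp [fv, e1, h0, h1, h2]

/-- Difference vector for conjugation by a distance-two swap. -/
lemma LB (v : Fin (m+4) → ℝ) (s : Fin (m+4)) :
    pt v (Equiv.swap s (s+1+1)) - pt v 1
      = (v (s+1+1) - v s) • fv (s-1)
        + ((v (s+1+1) - v s) + (v (s+1+1+1) - v (s+1))) • fv s
        + (v (s+1+1+1) - v (s+1)) • fv (s+1) := by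
  have d10 : s + 1 ≠ s := ne_of_shift (by abel) one_ne
  have d20 : s + 1 + 1 ≠ s := ne_of_shift (by abel) two_ne
  have d21 : s + 1 + 1 ≠ s + 1 := ne_of_shift (by abel) one_ne
  have d30 : s + 1 + 1 + 1 ≠ s := ne_of_shift (by abel) three_ne
  have d32 : s + 1 + 1 + 1 ≠ s + 1 + 1 := ne_of_shift (by abel) one_ne
  have dm0 : s - 1 ≠ s := ne_of_shift (show s - 1 - s = -1 by abel) (neg_ne_zero.mpr one_ne)
  have dm1 : s - 1 ≠ s + 1 :=
    ne_of_shift (show s - 1 - (s+1) = -(1+1) by abel) (neg_ne_zero.mpr two_ne)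
  have dm2 : s - 1 ≠ s + 1 + 1 :=
    ne_of_shift (show s - 1 - (s+1+1) = -(1+1+1) by abel) (neg_ne_zero.mpr three_ne)
  have e1 : s - 1 + 1 = s := by abel
  funext i
  simp only [Pi.sub_apply, Pi.add_apply, Pi.smul_apply, smul_eq_mul, pt_apply,
    Equiv.swap_inv, inv_one, Equiv.Perm.coe_one, id_eq]
  by_cases h0 : i = s
  · subst h0
    rw [Equiv.swap_apply_left, Equiv.swap_apply_of_ne_of_ne d30 d32]
    simp [fv, e1, Ne.symm dm0, Ne.symm d10, Ne.symm d20]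
    try ring
  by_cases h2 : i = s + 1 + 1
  · subst h2
    rw [Equiv.swap_apply_right, Equiv.swap_apply_of_ne_of_ne d10 (fun h => d21 h.symm)]
    simp [fv, e1, Ne.symm dm2, Ne.symm d20, d20, d21]
    try ring
  by_cases hm : i = s - 1
  · subst hm
    rw [Equiv.swap_apply_of_ne_of_ne dm0 dm2, e1, Equiv.swap_apply_left]
    simp [fv, e1, dm0, dm1, dm2]
    try ring
  by_cases h1 : i = s + 1
  · subst h1
    rw [Equiv.swap_apply_of_ne_of_ne d10 (fun h => d21 h.symm), Equiv.swap_apply_right]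
    simp [fv, e1, Ne.symm dm1, d10, Ne.symm d21]
    try ring
  · have hi1 : i + 1 ≠ s := fun h => hm (eq_sub_of_add_eq h)
    have hi2 : i + 1 ≠ s + 1 + 1 := fun h => h1 (add_right_cancel h)
    rw [Equiv.swap_apply_of_ne_of_ne h0 h2, Equiv.swap_apply_of_ne_of_ne hi1 hi2]
    simp [fv, e1, h0, h1, h2, hm]

variable (v : Fin (m+4) → ℝ)

/-- The span of the circuit-point differences. -/
noncomputable def W : Submodule ℝ (Fin (m+4) → ℝ) :=
  vectorSpan ℝ {x : Fin (m+4) → ℝ | IsCircuitPt v x}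

lemma diff_mem (g h : Equiv.Perm (Fin (m+4))) : pt v g - pt v h ∈ W v := by
  have := vsub_mem_vectorSpan ℝ (Set.mem_setOf.mpr (pt_circuit v g))
    (Set.mem_setOf.mpr (pt_circuit v h))
  rwa [vsub_eq_sub] at this

lemma A_mem (s : Fin (m+4)) :
    (v (s+1) - v s) • fv (s-1) + (v (s+1+1) - v s) • fv s ∈ W v := by
  rw [← LA v s]; exact diff_mem v _ 1

lemma B_mem (s : Fin (m+4)) :
    (v (s+1+1) - v s) • fv (s-1)
      + ((v (s+1+1) - v s) + (v (s+1+1+1) - v (s+1))) • fv s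
      + (v (s+1+1+1) - v (s+1)) • fv (s+1) ∈ W v := by
  rw [← LB v s]; exact diff_mem v _ 1

lemma step_down (hv : StrictMono v) (s : Fin (m+4)) (h : fv s ∈ W v) : fv (s - 1) ∈ W v := by
  have d10 : s + 1 ≠ s := ne_of_shift (by abel) one_ne
  have ha : v (s+1) - v s ≠ 0 := sub_ne_zero_of_ne (hv.injective.ne d10)
  have : fv (s-1) = (v (s+1) - v s)⁻¹ •
      (((v (s+1) - v s) • fv (s-1) + (v (s+1+1) - v s) • fv s) - (v (s+1+1) - v s) • fv s) := by
    rw [add_sub_cancel_right, smul_smul, inv_mul_cancel₀ ha, one_smul]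
  rw [this]
  exact Submodule.smul_mem _ _ (Submodule.sub_mem _ (A_mem v s) (Submodule.smul_mem _ _ h))

/-- The special index `n - 3`. -/
def s0 : Fin (m+4) := ⟨m+1, by omega⟩

lemma s0_1 : (s0 : Fin (m+4)) + 1 = ⟨m+2, by omega⟩ := by
  simp [s0, Fin.ext_iff, Fin.add_def, Nat.mod_eq_of_lt]

lemma s0_2 : (s0 : Fin (m+4)) + 1 + 1 = ⟨m+3, by omega⟩ := by
  rw [s0_1]
  simp [Fin.ext_iff, Fin.add_def, Nat.mod_eq_of_lt]

lemma s0_3 : (s0 : Fin (m+4)) + 1 + 1 + 1 = 0 := by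
  rw [s0_2]
  simp [Fin.ext_iff, Fin.add_def]

lemma base (hv : StrictMono v) : fv (s0 : Fin (m+4)) ∈ W v := by
  set a : ℝ := v (s0+1) - v s0 with ha
  set c : ℝ := v (s0+1+1) - v s0 with hc
  set a' : ℝ := v (s0+1+1) - v (s0+1) with ha'
  set c' : ℝ := v (s0+1+1+1) - v (s0+1) with hc'
  set K : ℝ := a*c + a*c' - c*c - a*a' with hK
  have hmem : K • fv (s0 : Fin (m+4)) ∈ W v := by
    have hB := B_mem v (s0 : Fin (m+4))
    have hA1 := A_mem v (s0 : Fin (m+4))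
    have hA2 := A_mem v ((s0 : Fin (m+4)) + 1)
    rw [show (s0 : Fin (m+4)) + 1 - 1 = s0 from add_sub_cancel_right s0 1] at hA2
    have key : K • fv (s0 : Fin (m+4)) =
        a • ((v (s0+1+1) - v s0) • fv (s0-1)
          + ((v (s0+1+1) - v s0) + (v (s0+1+1+1) - v (s0+1))) • fv s0
          + (v (s0+1+1+1) - v (s0+1)) • fv (s0+1))
        - c • ((v (s0+1) - v s0) • fv (s0-1) + (v (s0+1+1) - v s0) • fv s0)
        - a • ((v (s0+1+1) - v (s0+1)) • fv s0 + (v (s0+1+1+1) - v (s0+1)) • fv (s0+1)) := by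
      rw [hK, ha, hc, ha', hc']
      module
    rw [key]
    exact Submodule.sub_mem _ (Submodule.sub_mem _ (Submodule.smul_mem _ _ hB)
      (Submodule.smul_mem _ _ hA1)) (Submodule.smul_mem _ _ hA2)
  have hKne : K ≠ 0 := by
    have h01 : v (s0 : Fin (m+4)) < v (s0+1) := by
      rw [s0_1]; exact hv (by simp [s0, Fin.lt_def])
    have h12 : v ((s0 : Fin (m+4))+1) < v (s0+1+1) := by
      rw [s0_2, s0_1]; exact hv (by simp [Fin.lt_def])
    have h30 : v ((s0 : Fin (m+4))+1+1+1) < v (s0+1+1) := by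
      rw [s0_3, s0_2]
      exact hv (by simp [Fin.lt_def])
    have hb : (0:ℝ) < v (s0+1+1) - v (s0+1) := by linarith
    have hb' : v ((s0 : Fin (m+4))+1+1+1) - v (s0+1+1) < 0 := by linarith
    have hapos : (0:ℝ) < a := by rw [ha]; linarith
    have hcpos : (0:ℝ) < c := by rw [hc]; linarith
    have hKeq : K = a * (v (s0+1+1+1) - v (s0+1+1)) - c * (v (s0+1+1) - v (s0+1)) := by
      rw [hK, ha, hc, ha', hc']; ring
    have : K < 0 := by
      rw [hKeq]
      have h1 : a * (v (s0+1+1+1) - v (s0+1+1)) < 0 := mul_neg_of_pos_of_neg hapos hb'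
      have h2 : 0 < c * (v (s0+1+1) - v (s0+1)) := mul_pos hcpos hb
      linarith
    exact ne_of_lt this
  have : fv (s0 : Fin (m+4)) = K⁻¹ • (K • fv (s0 : Fin (m+4))) := by
    rw [smul_smul, inv_mul_cancel₀ hKne, one_smul]
  rw [this]
  exact Submodule.smul_mem _ _ hmem

open Fin.NatCast in
lemma all_mem (hv : StrictMono v) (j : Fin (m+4)) : fv j ∈ W v := by
  have hk : ∀ k : ℕ, fv ((s0 : Fin (m+4)) - (k : Fin (m+4))) ∈ W v := by
    intro k
    induction k with
    | zero => simpa using base v hv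
    | succ k ih =>
        have hcast : (((k+1 : ℕ)) : Fin (m+4)) = (k : Fin (m+4)) + 1 := by push_cast; ring
        rw [hcast, ← sub_sub]
        exact step_down v hv _ ih
  have := hk ((s0 - j).val)
  rwa [Fin.cast_val_eq_self, sub_sub_cancel] at this

end CircuitDimAux

open CircuitDimAux in
/-- For `n ≥ 4`, the convex hull of the set of circuits on values `v_1 < ⋯ < v_n`
has affine dimension exactly `n − 1`. -/
theorem stmt_1 (n : ℕ) (hn : 4 ≤ n) (v : Fin n → ℝ) (hv : StrictMono v) :
    Module.finrank ℝ
        (vectorSpan ℝ (convexHull ℝ {x : Fin n → ℝ | IsCircuitPt v x})) = n - 1 := by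
  obtain ⟨m, rfl⟩ : ∃ m, n = m + 4 := ⟨n - 4, by omega⟩
  classical
  have hWdef : vectorSpan ℝ (convexHull ℝ {x : Fin (m+4) → ℝ | IsCircuitPt v x}) = W v := by
    rw [W, ← direction_affineSpan, affineSpan_convexHull, direction_affineSpan]
  rw [hWdef]
  -- the sum functional
  set φ : (Fin (m+4) → ℝ) →ₗ[ℝ] ℝ := ∑ i : Fin (m+4), LinearMap.proj i with hφ
  have hφapply : ∀ y : Fin (m+4) → ℝ, φ y = ∑ i, y i := by
    intro y; simp [hφ, LinearMap.sum_apply]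
  -- upper bound : W ≤ ker φ
  have hWle : W v ≤ LinearMap.ker φ := by
    rw [W, vectorSpan_def]
    rw [Submodule.span_le]
    rintro z hz
    obtain ⟨x, hx, y, hy, rfl⟩ := hz
    obtain ⟨σ, -, hxe⟩ := hx
    obtain ⟨τ, -, hye⟩ := hy
    simp only [SetLike.mem_coe, LinearMap.mem_ker, vsub_eq_sub]
    rw [hφapply]
    have hxsum : ∑ i, x i = ∑ i, v i := by
      rw [Finset.sum_congr rfl (fun i _ => hxe i)]
      exact Equiv.sum_comp σ v
    have hysum : ∑ i, y i = ∑ i, v i := by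
      rw [Finset.sum_congr rfl (fun i _ => hye i)]
      exact Equiv.sum_comp τ v
    simp only [Pi.sub_apply, Finset.sum_sub_distrib]
    rw [hxsum, hysum, sub_self]
  -- φ is surjective
  have hφsurj : Function.Surjective φ := by
    intro r
    refine ⟨fun j => if j = 0 then r else 0, ?_⟩
    rw [hφapply]
    simp [Finset.sum_ite_eq']
  have hker : Module.finrank ℝ (LinearMap.ker φ) = m + 3 := by
    have := LinearMap.finrank_range_add_finrank_ker φ
    rw [LinearMap.range_eq_top.mpr hφsurj, finrank_top, Module.finrank_self,
      Module.finrank_fintype_fun_eq_card, Fintype.card_fin] at this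
    omega
  have hup : Module.finrank ℝ (W v) ≤ m + 3 := by
    rw [← hker]
    exact Submodule.finrank_mono hWle
  -- lower bound
  set F : Fin (m+3) → (Fin (m+4) → ℝ) := fun j => fv j.castSucc with hF
  have hTF : LinearIndependent ℝ F := by
    set T : (Fin (m+4) → ℝ) →ₗ[ℝ] (Fin (m+3) → ℝ) :=
      { toFun := fun y (j : Fin (m+3)) => ∑ i ∈ Finset.Iic j.castSucc, y i
        map_add' := by intros; funext j; simp [Finset.sum_add_distrib]
        map_smul' := by intros; funext j; simp [Finset.mul_sum] } with hT
    apply LinearIndependent.of_comp T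
    have hcomp : ⇑T ∘ F = fun (j : Fin (m+3)) => Pi.single j (1:ℝ) := by
      funext j k
      simp only [Function.comp_apply, hT, hF, LinearMap.coe_mk, AddHom.coe_mk, fv]
      rw [Finset.sum_sub_distrib, Finset.sum_ite_eq' _ (Fin.castSucc j),
        Finset.sum_ite_eq' _ (Fin.castSucc j + 1)]
      rw [Fin.coeSucc_eq_succ]
      simp only [Finset.mem_Iic, Fin.castSucc_le_castSucc_iff, Fin.succ_le_castSucc_iff]
      rw [Pi.single_apply]
      rcases lt_trichotomy j k with h | h | h
      · simp [h.le, h, h.ne']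
      · simp [h]
      · simp [h.not_ge, h.not_gt, h.ne]
    rw [hcomp]
    have : (fun (j : Fin (m+3)) => Pi.single j (1:ℝ)) = ⇑(Pi.basisFun ℝ (Fin (m+3))) := by
      funext j
      rw [Pi.basisFun_apply]
    rw [this]
    exact (Pi.basisFun ℝ (Fin (m+3))).linearIndependent
  have hspan : Submodule.span ℝ (Set.range F) ≤ W v := by
    rw [Submodule.span_le]
    rintro _ ⟨j, rfl⟩
    exact all_mem v hv _
  have hlow : m + 3 ≤ Module.finrank ℝ (W v) := by
    have h1 : Module.finrank ℝ (Submodule.span ℝ (Set.range F)) = m + 3 := by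
      rw [finrank_span_eq_card hTF, Fintype.card_fin]
    rw [← h1]
    exact Submodule.finrank_mono hspan
  omega
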